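/- Let G be a connected subgraph of Q_n and let a, b be distinct vertices of G. Then the vertex set of G can be partitioned into two sets inducing connected subgraphs G_a and G_b with a ∈ G_a and b ∈ G_b, such that every vertex v in G_c has degree at least d_G(v) - 1 in G_c, for c ∈ {a, b}. -/

import Mathlib

def hypercube (n : ℕ) : SimpleGraph (Fin n → Bool) :=
  SimpleGraph.fromRel (fun x y => hammingDist x y = 1)

open SimpleGraph Relation in
private lemma rtg_to_reach {V : Type*} {H : SimpleGraph V} (G : H.Subgraph) {x y : V}
    (h : ReflTransGen G.Adj x y) (hx : x ∈ G.verts) :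
    ∀ (hy : y ∈ G.verts), G.coe.Reachable ⟨x, hx⟩ ⟨y, hy⟩ := by
  induction h with
  | refl => intro hy; exact Reachable.refl _
  | tail h₁ h₂ ih =>
      intro hy
      exact (ih (G.edge_vert h₂)).trans (SimpleGraph.Adj.reachable h₂.coe)

open SimpleGraph Relation in
private lemma reach_to_rtg {V : Type*} {H : SimpleGraph V} (G : H.Subgraph) {u v : ↥G.verts}
    (h : G.coe.Reachable u v) : ReflTransGen G.Adj u.val v.val := by
  obtain ⟨w⟩ := h
  induction w with
  | nil => exact .refl
  | cons a _ ih => exact .head a ih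

open SimpleGraph Relation in
private lemma connected_of_base {V : Type*} {H : SimpleGraph V} (G : H.Subgraph) {S : Set V}
    {a0 : V} (ha0 : a0 ∈ S)
    (hreach : ∀ v ∈ S, ReflTransGen (G.induce S).Adj a0 v) :
    (G.induce S).coe.Connected := by
  rw [SimpleGraph.connected_iff]
  refine ⟨fun u v => ?_, ⟨⟨a0, ha0⟩⟩⟩
  have hu : u.val ∈ S := u.prop
  have hv : v.val ∈ S := v.prop
  have h1 := rtg_to_reach (G.induce S) (hreach u.val hu) ha0 hu
  have h2 := rtg_to_reach (G.induce S) (hreach v.val hv) ha0 hv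
  exact h1.symm.trans h2

open SimpleGraph Relation in
private lemma exists_split {V : Type*} [Finite V] {H : SimpleGraph V} (G : H.Subgraph)
    (hconn : G.coe.Connected) {β : Type*} (f : V → β)
    {a b : V} (ha : a ∈ G.verts) (hb : b ∈ G.verts) (hfab : f a ≠ f b) :
    ∃ S : Set V, S ⊆ G.verts ∧ a ∈ S ∧ b ∉ S ∧
      (∀ x ∈ S, ∀ y, G.Adj x y → f x = f y → y ∈ S) ∧
      (G.induce S).coe.Connected ∧ (G.induce (G.verts \ S)).coe.Connected := by
  classical
  set Rf : V → V → Prop := fun x y => G.Adj x y ∧ f x = f y with hRf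
  set 𝒮 : Set (Set V) := {S | S ⊆ G.verts ∧ a ∈ S ∧ b ∉ S ∧
      (∀ x ∈ S, ∀ y, G.Adj x y → f x = f y → y ∈ S) ∧ (G.induce S).coe.Connected}
    with h𝒮
  -- the initial member S₀
  have hS0mem : {v | ReflTransGen Rf a v} ∈ 𝒮 := by
    set S0 : Set V := {v | ReflTransGen Rf a v} with hS0
    have hsub : S0 ⊆ G.verts := by
      intro v hv
      rcases hv.cases_tail with rfl | ⟨c, _, hc⟩
      · exact ha
      · exact G.edge_vert hc.1.symm
    have hfa : ∀ v ∈ S0, f a = f v := by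
      intro v hv
      induction hv with
      | refl => rfl
      | tail h₁ h₂ ih => exact ih.trans h₂.2
    refine ⟨hsub, ReflTransGen.refl, fun hbs => hfab (hfa b hbs), ?_, ?_⟩
    · intro x hx y hxy hf
      exact hx.tail ⟨hxy, hf⟩
    · apply connected_of_base G (ReflTransGen.refl)
      intro v hv
      induction hv with
      | refl => exact .refl
      | tail h₁ h₂ ih =>
          exact ih.tail ⟨h₁, h₁.tail h₂, h₂.1⟩
  obtain ⟨S, hSmem, hmax⟩ :=
    Set.Finite.exists_maximalFor Set.ncard 𝒮 (Set.toFinite 𝒮) ⟨_, hS0mem⟩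
  obtain ⟨hSsub, haS, hbS, hclosed, hSconn⟩ := hSmem
  refine ⟨S, hSsub, haS, hbS, hclosed, hSconn, ?_⟩
  set Sc : Set V := G.verts \ S with hSc
  have hbc : b ∈ Sc := ⟨hb, hbS⟩
  have rc_symm : Symmetric fun x y => (G.induce Sc).Adj x y :=
    fun x y h => h.symm
  have key : ∀ v ∈ Sc, ReflTransGen (G.induce Sc).Adj b v := by
    intro v hv
    by_contra hvT
    set C : Set V := {w | ReflTransGen (G.induce Sc).Adj v w} with hC
    have hCsub : C ⊆ Sc := by
      intro w hw
      rcases (hw : ReflTransGen _ v w).cases_tail with rfl | ⟨c, _, hc⟩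
      · exact hv
      · exact hc.2.1
    have hvC : v ∈ C := ReflTransGen.refl
    have hbC : b ∉ C := fun h => hvT ((fun h' => (@ReflTransGen.symmetric _ _ ⟨fun x y h => rc_symm h⟩).symm _ _ h') h)
    have hCclosed : ∀ x ∈ C, ∀ y, G.Adj x y → f x = f y → y ∈ C := by
      intro x hx y hxy hf
      have hxSc : x ∈ Sc := hCsub hx
      have hyv : y ∈ G.verts := G.edge_vert hxy.symm
      have hyS : y ∉ S := fun hyS => hxSc.2 (hclosed y hyS x hxy.symm hf.symm)
      exact ReflTransGen.tail hx ⟨hxSc, ⟨hyv, hyS⟩, hxy⟩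
    -- find a crossing edge
    have hcross : ∃ x ∈ C, ∃ y ∈ S, G.Adj x y := by
      have hva : ReflTransGen G.Adj v a :=
        reach_to_rtg G (hconn.preconnected ⟨v, hv.1⟩ ⟨a, ha⟩)
      have step : ∀ w, ReflTransGen G.Adj v w →
          w ∈ C ∨ ∃ x ∈ C, ∃ y ∈ S, G.Adj x y := by
        intro w hw
        induction hw with
        | refl => exact Or.inl hvC
        | @tail w' u h₁ h₂ ih =>
            rcases ih with hwC | hdone
            · by_cases huS : u ∈ S
              · exact Or.inr ⟨w', hwC, u, huS, h₂⟩
              · have huSc : u ∈ Sc := ⟨G.edge_vert h₂.symm, huS⟩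
                exact Or.inl (ReflTransGen.tail hwC ⟨hCsub hwC, huSc, h₂⟩)
            · exact Or.inr hdone
      rcases step a hva with haC | h
      · exact absurd haS (hCsub haC).2
      · exact h
    obtain ⟨x, hxC, y, hyS, hxy⟩ := hcross
    set S' : Set V := S ∪ C with hS'
    have hS'sub : S' ⊆ G.verts := Set.union_subset hSsub (fun z hz => (hCsub hz).1)
    have upg : ∀ {w u}, w ∈ C → ReflTransGen (G.induce Sc).Adj w u →
        ReflTransGen (G.induce S').Adj w u := by
      intro w u hw h
      induction h with
      | refl => exact .refl
      | @tail w' u h₁ h₂ ih =>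
          have hmid : w' ∈ C := ReflTransGen.trans hw h₁
          have hend : u ∈ C := ReflTransGen.tail hmid h₂
          exact ih.tail ⟨Or.inr hmid, Or.inr hend, h₂.2.2⟩
    have hbaseS : ∀ u ∈ S, ReflTransGen (G.induce S').Adj a u := by
      intro u hu
      have h1 : ReflTransGen (G.induce S).Adj a u :=
        reach_to_rtg (G.induce S) (hSconn.preconnected ⟨a, haS⟩ ⟨u, hu⟩)
      exact ReflTransGen.mono (fun p q hpq => ⟨Or.inl hpq.1, Or.inl hpq.2.1, hpq.2.2⟩) _ _ h1
    have hS'reach : ∀ w ∈ S', ReflTransGen (G.induce S').Adj a w := by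
      intro w hw
      rcases hw with hwS | hwC
      · exact hbaseS w hwS
      · have h1 := hbaseS y hyS
        have h2 : (G.induce S').Adj y x := ⟨Or.inl hyS, Or.inr hxC, hxy.symm⟩
        have h3 : ReflTransGen (G.induce Sc).Adj x w :=
          ((fun h' => (@ReflTransGen.symmetric _ _ ⟨fun x y h => rc_symm h⟩).symm _ _ h') hxC).trans hwC
        exact (h1.tail h2).trans (upg hxC h3)
    have hS'mem : S' ∈ 𝒮 := by
      refine ⟨hS'sub, Or.inl haS, fun h => h.elim hbS hbC, ?_, ?_⟩
      · intro p hp q hpq hf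
        rcases hp with hpS | hpC
        · exact Or.inl (hclosed p hpS q hpq hf)
        · exact Or.inr (hCclosed p hpC q hpq hf)
      · exact connected_of_base G (Or.inl haS) hS'reach
    have hss : S ⊂ S' := ⟨Set.subset_union_left, fun h => hv.2 (h (Or.inr hvC))⟩
    have hlt : S.ncard < S'.ncard := Set.ncard_lt_ncard hss (Set.toFinite S')
    exact absurd (hmax hS'mem hlt.le) (not_le.mpr hlt)
  exact connected_of_base G hbc key

open SimpleGraph Relation in
private lemma hyp_unique_flip {n : ℕ} {v w : Fin n → Bool} (h : (hypercube n).Adj v w)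
    {i : Fin n} (hi : v i ≠ w i) : w = Function.update v i (!(v i)) := by
  classical
  rw [hypercube, SimpleGraph.fromRel_adj] at h
  obtain ⟨hne, hd⟩ := h
  have hd1 : hammingDist v w = 1 := by
    rcases hd with h | h
    · exact h
    · rw [hammingDist_comm]; exact h
  have hset : ({j | v j ≠ w j} : Finset (Fin n)) = {i} := by
    obtain ⟨k, hk⟩ := Finset.card_eq_one.mp hd1
    have hik : i ∈ ({j | v j ≠ w j} : Finset (Fin n)) := by
      simp [hi]
    rw [hk] at hik ⊢
    simp only [Finset.mem_singleton] at hik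
    rw [hik]
  funext j
  by_cases hj : j = i
  · subst hj
    rw [Function.update_self]
    revert hi; cases v j <;> cases w j <;> simp
  · rw [Function.update_of_ne hj]
    by_contra hne'
    have : j ∈ ({j | v j ≠ w j} : Finset (Fin n)) := by
      simp only [Finset.mem_filter, Finset.mem_univ, true_and]; exact fun h => hne' h.symm
    rw [hset] at this
    exact hj (Finset.mem_singleton.mp this)

open SimpleGraph Relation in
private lemma degree_bound {n : ℕ} (G : (hypercube n).Subgraph) (A : Set (Fin n → Bool))
    (i : Fin n)
    (hclosed : ∀ x ∈ A, ∀ y, G.Adj x y → x i = y i → y ∈ A)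
    (v : Fin n → Bool) (hv : v ∈ A) :
    (G.neighborSet v).ncard - 1 ≤ ((G.induce A).neighborSet v).ncard := by
  classical
  have hsub : G.neighborSet v ⊆
      (G.induce A).neighborSet v ∪ {Function.update v i (!(v i))} := by
    intro w hw
    have hw' : G.Adj v w := hw
    by_cases h : v i = w i
    · exact Or.inl (⟨hv, hclosed v hv w hw' h, hw'⟩ : (G.induce A).Adj v w)
    · exact Or.inr (hyp_unique_flip (G.adj_sub hw') h)
  have h1 : (G.neighborSet v).ncard ≤ ((G.induce A).neighborSet v).ncard + 1 := by
    calc (G.neighborSet v).ncard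
        ≤ ((G.induce A).neighborSet v ∪ {Function.update v i (!(v i))}).ncard :=
          Set.ncard_le_ncard hsub (Set.toFinite _)
      _ ≤ ((G.induce A).neighborSet v).ncard
            + ({Function.update v i (!(v i))} : Set _).ncard := Set.ncard_union_le _ _
      _ = ((G.induce A).neighborSet v).ncard + 1 := by rw [Set.ncard_singleton]
  omega

/-- Splitting lemma: a connected subgraph `G` of `Q_n` with distinct vertices `a, b`
can be partitioned into connected induced subgraphs `G_a ∋ a` and `G_b ∋ b` in which
every vertex loses at most one neighbour. -/
theorem hypercube_splitting (n : ℕ) (G : (hypercube n).Subgraph)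
    (hconn : G.coe.Connected)
    (a b : Fin n → Bool) (ha : a ∈ G.verts) (hb : b ∈ G.verts) (hab : a ≠ b) :
    ∃ A B : Set (Fin n → Bool),
      A ∪ B = G.verts ∧ Disjoint A B ∧ a ∈ A ∧ b ∈ B ∧
      (G.induce A).coe.Connected ∧ (G.induce B).coe.Connected ∧
      (∀ v ∈ A, (G.neighborSet v).ncard - 1 ≤ ((G.induce A).neighborSet v).ncard) ∧
      (∀ v ∈ B, (G.neighborSet v).ncard - 1 ≤ ((G.induce B).neighborSet v).ncard) := by
  classical
  obtain ⟨i, hi⟩ : ∃ i, a i ≠ b i := Function.ne_iff.mp hab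
  obtain ⟨S, hSsub, haS, hbS, hclosed, hSconn, hScconn⟩ :=
    exists_split G hconn (fun v => v i) ha hb hi
  have hclosedB : ∀ x ∈ G.verts \ S, ∀ y, G.Adj x y → x i = y i → y ∈ G.verts \ S := by
    intro x hx y hxy hf
    exact ⟨G.edge_vert hxy.symm, fun hyS => hx.2 (hclosed y hyS x hxy.symm hf.symm)⟩
  refine ⟨S, G.verts \ S, ?_, Set.disjoint_sdiff_right, haS, ⟨hb, hbS⟩,
    hSconn, hScconn, ?_, ?_⟩
  · rw [Set.union_diff_cancel hSsub]
  · exact fun v hv => degree_bound G S i hclosed v hv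
  · exact fun v hv => degree_bound G (G.verts \ S) i hclosedB v hv
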